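/- Let H be a real Hilbert space, let f_1,…,f_k : H → ℝ be locally Lipschitz near every point of H, let x ∈ H, ε > 0 and c ∈ (0,1). Let Ξ = {w_1,…,w_m} ⊆ F_ε(x) be a finite set, and let ṽ ∈ H with −ṽ ∈ convexHull(Ξ) and ‖ṽ‖ ≤ ‖w‖ for all w ∈ convexHull(Ξ) (i.e., up to sign, ṽ is the minimal-norm element of −convexHull(Ξ)), and assume ṽ ≠ 0. If f_i(x + (ε/‖ṽ‖)·ṽ) > f_i(x) − c·ε·‖ṽ‖ for some i ∈ {1,…,k}, then there exist t' ∈ (0, ε/‖ṽ‖] and w' ∈ ∂f_i(x + t'·ṽ) such that ⟨ṽ, w'⟩ > −c·‖ṽ‖². In particular, w' ∈ F_ε(x) and w' ∉ convexHull(Ξ). -/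

import Mathlib

open Filter Topology RealInnerProductSpace

/-- Clarke generalized directional derivative
`f°(x;v) = limsup_{y→x, t↓0} (f(y+tv) − f(y))/t`. -/
noncomputable def clarkeDir {H : Type*} [NormedAddCommGroup H] [InnerProductSpace ℝ H]
    (f : H → ℝ) (x v : H) : ℝ :=
  limsup (fun p : H × ℝ => (f (p.1 + p.2 • v) - f p.1) / p.2)
    ((𝓝 x) ×ˢ (𝓝[>] (0 : ℝ)))

/-- Clarke subdifferential, with the dual of `H` identified with `H` via the Riesz map:
`∂f(x) = {w : ⟪w, v⟫ ≤ f°(x;v) for all v}`. -/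
def clarkeSubdiff {H : Type*} [NormedAddCommGroup H] [InnerProductSpace ℝ H]
    (f : H → ℝ) (x : H) : Set H :=
  {w : H | ∀ v : H, ⟪w, v⟫ ≤ clarkeDir f x v}

/-- Goldstein ε-subdifferential
`∂_ε f(x) = closure (convexHull (⋃_{y ∈ closedBall x ε} ∂f(y)))`. -/
def goldsteinSubdiff {H : Type*} [NormedAddCommGroup H] [InnerProductSpace ℝ H]
    (f : H → ℝ) (ε : ℝ) (x : H) : Set H :=
  closure (convexHull ℝ (⋃ y ∈ Metric.closedBall x ε, clarkeSubdiff f y))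

/-- `f` is locally Lipschitz near `x`: Lipschitz on some open ball around `x`. -/
def LocallyLipschitzNear {H : Type*} [NormedAddCommGroup H]
    (f : H → ℝ) (x : H) : Prop :=
  ∃ ε > 0, ∃ L : NNReal, LipschitzOnWith L f (Metric.ball x ε)

/-- Multiobjective ε-subdifferential `F_ε(x) = closure (convexHull (⋃ i, ∂_ε f_i(x)))`. -/
def multiSubdiff {H : Type*} [NormedAddCommGroup H] [InnerProductSpace ℝ H]
    {k : ℕ} (f : Fin k → H → ℝ) (ε : ℝ) (x : H) : Set H :=
  closure (convexHull ℝ (⋃ i : Fin k, goldsteinSubdiff (f i) ε x))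

/-- The weak topology on `H`: the topology induced by the functionals `⟪·, v⟫`, `v : H`. -/
noncomputable def weakTopology (H : Type*) [NormedAddCommGroup H] [InnerProductSpace ℝ H] :
    TopologicalSpace H :=
  ⨅ v : H, TopologicalSpace.induced (fun x : H => ⟪x, v⟫) inferInstance


open Set

section Aux

variable {H : Type*} [NormedAddCommGroup H] [InnerProductSpace ℝ H]

/-- The difference quotient appearing in the Clarke directional derivative. -/
noncomputable def cQuot (f : H → ℝ) (v : H) (p : H × ℝ) : ℝ := (f (p.1 + p.2 • v) - f p.1) / p.2

lemma clarkeDir_eq (f : H → ℝ) (y v : H) :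
    clarkeDir f y v = limsup (cQuot f v) ((𝓝 y) ×ˢ (𝓝[>] (0 : ℝ))) := rfl

lemma bdd_of_abs {α : Type*} {F : Filter α} {u : α → ℝ} {B : ℝ} (h : ∀ᶠ x in F, |u x| ≤ B) :
    F.IsBoundedUnder (· ≤ ·) u :=
  isBoundedUnder_of_eventually_le (h.mono fun _ h => (abs_le.1 h).2)

lemma cobdd_of_abs {α : Type*} {F : Filter α} [F.NeBot] {u : α → ℝ} {B : ℝ}
    (h : ∀ᶠ x in F, |u x| ≤ B) : F.IsCoboundedUnder (· ≤ ·) u :=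
  (isBoundedUnder_of_eventually_ge (h.mono fun _ h => (abs_le.1 h).1)).isCoboundedUnder_le

lemma limsup_comp_le {γ α : Type*} {u : α → ℝ} {φ : γ → α} {F : Filter γ} {G : Filter α}
    (hφ : Tendsto φ F G) (h1 : F.IsCoboundedUnder (· ≤ ·) (fun x => u (φ x)))
    (h2 : G.IsBoundedUnder (· ≤ ·) u) :
    limsup (fun x => u (φ x)) F ≤ limsup u G := by
  have key : limsup (fun x => u (φ x)) F = limsup u (map φ F) := by
    rw [limsup, limsup, map_map]; rfl
  have h1' : (map φ F).IsCoboundedUnder (· ≤ ·) u := by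
    rw [Filter.IsCoboundedUnder, map_map]; exact h1
  exact key ▸ limsup_le_limsup_of_le hφ h1' h2

lemma limsup_add_le' {α : Type*} {F : Filter α} [F.NeBot] {u v : α → ℝ} {Bu Bv : ℝ}
    (hu : ∀ᶠ x in F, |u x| ≤ Bu) (hv : ∀ᶠ x in F, |v x| ≤ Bv) :
    limsup (fun x => u x + v x) F ≤ limsup u F + limsup v F := by
  refine le_of_forall_pos_le_add fun ε hε => ?_
  have h1 : ∀ᶠ x in F, u x < limsup u F + ε / 2 :=
    eventually_lt_of_limsup_lt (lt_add_of_pos_right _ (by positivity)) (bdd_of_abs hu)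
  have h2 : ∀ᶠ x in F, v x < limsup v F + ε / 2 :=
    eventually_lt_of_limsup_lt (lt_add_of_pos_right _ (by positivity)) (bdd_of_abs hv)
  refine limsup_le_of_le (cobdd_of_abs (B := Bu + Bv) ?_) ?_
  · filter_upwards [hu, hv] with x h1 h2 using (abs_add_le _ _).trans (add_le_add h1 h2)
  · filter_upwards [h1, h2] with x h1 h2; linarith

lemma llip_bound {f : H → ℝ} {y : H} (hl : LocallyLipschitzNear f y) :
    ∃ B : ℝ, 0 ≤ B ∧ ∀ v : H, ∀ᶠ p in (𝓝 y) ×ˢ (𝓝[>] (0 : ℝ)), |cQuot f v p| ≤ B * ‖v‖ := by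
  obtain ⟨δ, hδ, L, hL⟩ := hl
  refine ⟨L, L.coe_nonneg, fun v => ?_⟩
  have h1 : Metric.ball y (δ / 2) ∈ 𝓝 y := Metric.ball_mem_nhds _ (by positivity)
  have h2 : Set.Ioo (0 : ℝ) (δ / (2 * (‖v‖ + 1))) ∈ 𝓝[>] (0 : ℝ) :=
    Ioo_mem_nhdsGT_of_mem ⟨le_rfl, by positivity⟩
  filter_upwards [prod_mem_prod h1 h2] with p hp
  have hp1 : p.1 ∈ Metric.ball y (δ / 2) := hp.1
  have hp2 : 0 < p.2 := hp.2.1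
  have hp3 : p.2 < δ / (2 * (‖v‖ + 1)) := hp.2.2
  have hvpos : (0:ℝ) < ‖v‖ + 1 := by positivity
  have hp3' : p.2 * (2 * (‖v‖ + 1)) < δ := by
    rw [lt_div_iff₀ (by positivity)] at hp3; exact hp3
  have hsm : p.2 * ‖v‖ < δ / 2 := by nlinarith [norm_nonneg v]
  have hmem1 : p.1 ∈ Metric.ball y δ := by
    have := Metric.mem_ball.1 hp1; rw [Metric.mem_ball]; linarith
  have hmem2 : p.1 + p.2 • v ∈ Metric.ball y δ := by
    rw [Metric.mem_ball] at hp1 ⊢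
    have hd : dist (p.1 + p.2 • v) p.1 = p.2 * ‖v‖ := by
      rw [dist_eq_norm, add_sub_cancel_left, norm_smul, Real.norm_eq_abs, abs_of_pos hp2]
    calc dist (p.1 + p.2 • v) y ≤ dist (p.1 + p.2 • v) p.1 + dist p.1 y := dist_triangle _ _ _
      _ < δ / 2 + δ / 2 := by rw [hd]; exact add_lt_add hsm hp1
      _ = δ := by ring
  have hlip := hL.dist_le_mul _ hmem2 _ hmem1
  have hd : dist (p.1 + p.2 • v) p.1 = p.2 * ‖v‖ := by
    rw [dist_eq_norm, add_sub_cancel_left, norm_smul, Real.norm_eq_abs, abs_of_pos hp2]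
  rw [Real.dist_eq, hd] at hlip
  have : |cQuot f v p| = |f (p.1 + p.2 • v) - f p.1| / p.2 := by
    rw [cQuot, abs_div, abs_of_pos hp2]
  rw [this, div_le_iff₀ hp2]
  calc |f (p.1 + p.2 • v) - f p.1| ≤ L * (p.2 * ‖v‖) := hlip
    _ = (L : ℝ) * ‖v‖ * p.2 := by ring

lemma clarkeDir_zero' {f : H → ℝ} (y : H) : clarkeDir f y 0 = 0 := by
  have : cQuot f (0 : H) = fun _ => (0 : ℝ) := by
    funext p; simp [cQuot]
  rw [clarkeDir_eq, this, limsup_const]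

lemma clarkeDir_add_le {f : H → ℝ} {y : H} (hl : LocallyLipschitzNear f y) (v w : H) :
    clarkeDir f y (v + w) ≤ clarkeDir f y v + clarkeDir f y w := by
  obtain ⟨B, hB0, hB⟩ := llip_bound hl
  set F := (𝓝 y) ×ˢ (𝓝[>] (0 : ℝ)) with hF
  set ψ : H × ℝ → H × ℝ := fun p => (p.1 + p.2 • w, p.2) with hψdef
  have hψ : Tendsto ψ F F := by
    refine Tendsto.prodMk ?_ tendsto_snd
    have h2 : Tendsto (fun p : H × ℝ => p.2 • w) F (𝓝 (0 : H)) := by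
      have := ((tendsto_snd (f := 𝓝 y) (g := 𝓝[>] (0:ℝ))).mono_right
        nhdsWithin_le_nhds).smul_const w
      simpa using this
    have := (tendsto_fst (f := 𝓝 y) (g := 𝓝[>] (0:ℝ))).add h2
    simpa using this
  have key : cQuot f (v + w) = fun p => cQuot f v (ψ p) + cQuot f w p := by
    funext p
    simp only [cQuot, hψdef, smul_add]
    have harg : p.1 + (p.2 • v + p.2 • w) = p.1 + p.2 • w + p.2 • v := by abel
    rw [harg]; ring
  have hbv : ∀ᶠ p in F, |cQuot f v (ψ p)| ≤ B * ‖v‖ := hψ.eventually (hB v)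
  rw [clarkeDir_eq, key]
  calc limsup (fun p => cQuot f v (ψ p) + cQuot f w p) F
      ≤ limsup (fun p => cQuot f v (ψ p)) F + limsup (cQuot f w) F := limsup_add_le' hbv (hB w)
    _ ≤ clarkeDir f y v + clarkeDir f y w := by
        refine add_le_add ?_ le_rfl
        exact limsup_comp_le hψ (cobdd_of_abs hbv) (bdd_of_abs (hB v))

end Aux

section Aux2

variable {H : Type*} [NormedAddCommGroup H] [InnerProductSpace ℝ H]

lemma clarkeDir_smul {f : H → ℝ} {y : H} (hl : LocallyLipschitzNear f y) {t : ℝ} (ht : 0 < t)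
    (v : H) : clarkeDir f y (t • v) = t * clarkeDir f y v := by
  obtain ⟨B, hB0, hB⟩ := llip_bound hl
  set F := (𝓝 y) ×ˢ (𝓝[>] (0 : ℝ)) with hF
  set ψ : H × ℝ → H × ℝ := fun p => (p.1, t * p.2) with hψdef
  set ψ' : H × ℝ → H × ℝ := fun p => (p.1, t⁻¹ * p.2) with hψ'def
  have hmk : ∀ (s : ℝ), 0 < s → Tendsto (fun p : H × ℝ => (p.1, s * p.2)) F F := by
    intro s hs
    refine Tendsto.prodMk tendsto_fst (tendsto_nhdsWithin_iff.2 ⟨?_, ?_⟩)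
    · have := ((tendsto_snd (f := 𝓝 y) (g := 𝓝[>] (0:ℝ))).mono_right
        nhdsWithin_le_nhds).const_mul s
      simpa using this
    · exact (tendsto_snd (f := 𝓝 y) (g := 𝓝[>] (0:ℝ))).eventually
        (eventually_mem_nhdsWithin) |>.mono fun p hp => mul_pos hs hp
  have hψ : Tendsto ψ F F := hmk t ht
  have hψ' : Tendsto ψ' F F := hmk t⁻¹ (inv_pos.2 ht)
  have key1 : cQuot f (t • v) = fun p => t * cQuot f v (ψ p) := by
    funext p
    simp only [cQuot, hψdef]
    rw [smul_smul, mul_comm p.2 t, ← mul_div_assoc, mul_div_mul_left _ _ ht.ne']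
  have compeq : ∀ p : H × ℝ, cQuot f v (ψ (ψ' p)) = cQuot f v p := by
    intro p
    have : ψ (ψ' p) = p := by
      simp only [hψdef, hψ'def, mul_inv_cancel_left₀ ht.ne']
    rw [this]
  have hbψ : ∀ᶠ p in F, |cQuot f v (ψ p)| ≤ B * ‖v‖ := hψ.eventually (hB v)
  have heq : limsup (fun p => cQuot f v (ψ p)) F = limsup (cQuot f v) F := by
    refine le_antisymm (limsup_comp_le hψ (cobdd_of_abs hbψ) (bdd_of_abs (hB v))) ?_
    have h2 : limsup (fun p => cQuot f v (ψ (ψ' p))) F ≤ limsup (fun p => cQuot f v (ψ p)) F := by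
      refine limsup_comp_le (u := fun p => cQuot f v (ψ p)) hψ' ?_ (bdd_of_abs hbψ)
      exact cobdd_of_abs (B := B * ‖v‖) ((hB v).mono fun p hp => by
        show |cQuot f v (ψ (ψ' p))| ≤ B * ‖v‖; rw [compeq p]; exact hp)
    calc limsup (cQuot f v) F = limsup (fun p => cQuot f v (ψ (ψ' p))) F := by
          apply limsup_congr; exact Eventually.of_forall fun p => (compeq p).symm
      _ ≤ _ := h2
  have hiso := (OrderIso.mulLeft₀ t ht).limsup_apply (f := F)
    (u := fun p => cQuot f v (ψ p)) (bdd_of_abs hbψ) (cobdd_of_abs hbψ)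
    (bdd_of_abs (B := t * (B * ‖v‖)) (hbψ.mono fun p hp => by
      rw [OrderIso.mulLeft₀_apply, abs_mul, abs_of_pos ht]
      exact mul_le_mul_of_nonneg_left hp ht.le))
    (cobdd_of_abs (B := t * (B * ‖v‖)) (hbψ.mono fun p hp => by
      rw [OrderIso.mulLeft₀_apply, abs_mul, abs_of_pos ht]
      exact mul_le_mul_of_nonneg_left hp ht.le))
  rw [clarkeDir_eq, key1]
  simp only [OrderIso.mulLeft₀_apply] at hiso
  rw [← hiso, heq]
  rfl

lemma clarkeDir_le_bound {f : H → ℝ} {y : H} {B : ℝ} {v : H}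
    (hB : ∀ᶠ p in (𝓝 y) ×ˢ (𝓝[>] (0 : ℝ)), |cQuot f v p| ≤ B * ‖v‖) :
    clarkeDir f y v ≤ B * ‖v‖ :=
  limsup_le_of_le (cobdd_of_abs hB) (hB.mono fun p hp => (abs_le.1 hp).2)

lemma exists_clarke_sub [CompleteSpace H] {f : H → ℝ} {y : H}
    (hl : LocallyLipschitzNear f y) {v : H} (hv : v ≠ 0) :
    ∃ w ∈ clarkeSubdiff f y, ⟪w, v⟫ = clarkeDir f y v := by
  set N : H → ℝ := fun u => clarkeDir f y u with hN
  have hNu : ∀ u : H, N u = clarkeDir f y u := fun _ => rfl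
  have hsum : 0 ≤ N v + N (-v) := by
    have h0 : clarkeDir f y 0 = 0 := clarkeDir_zero' y
    have h1 := clarkeDir_add_le hl v (-v)
    rw [add_neg_cancel, h0] at h1
    rw [hNu, hNu]
    linarith
  set p := LinearPMap.mkSpanSingleton (K := ℝ) (L := ℝ) (σ := RingHom.id ℝ) v (N v) hv with hp
  have hdom : ∀ z : p.domain, p z ≤ N z := by
    intro z
    have hz : (z : H) ∈ Submodule.span ℝ {v} := z.2
    obtain ⟨a, ha⟩ := Submodule.mem_span_singleton.1 hz
    have hzz : z = ⟨a • v, by rw [ha]; exact z.2⟩ := Subtype.ext ha.symm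
    have happ : p z = a * N v := by
      rw [hzz]
      exact (LinearPMap.mkSpanSingleton'_apply v (N v) _ a _).trans (by rw [smul_eq_mul, RingHom.id_apply])
    have hcoe : (z : H) = a • v := ha.symm
    rw [happ, hcoe]
    rcases lt_trichotomy a 0 with h | h | h
    · have hna : 0 < -a := neg_pos.2 h
      have harg : N (a • v) = (-a) * N (-v) := by
        have harg' : a • v = (-a) • (-v) := by simp
        rw [hNu, hNu, harg']
        exact clarkeDir_smul hl hna (-v)
      rw [harg]
      nlinarith [hsum]
    · subst h
      simp only [zero_smul, zero_mul]
      rw [hNu]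
      exact (clarkeDir_zero' y).symm.le
    · rw [hNu, hNu]
      exact (clarkeDir_smul hl h v).symm.le
  obtain ⟨g, hg1, hg2⟩ := exists_extension_of_le_sublinear p N
    (fun c hc u => by rw [hNu, hNu]; exact clarkeDir_smul hl hc u)
    (fun u₁ u₂ => by rw [hNu, hNu, hNu]; exact clarkeDir_add_le hl u₁ u₂) hdom
  obtain ⟨B, hB0, hB⟩ := llip_bound hl
  have hNle : ∀ u : H, N u ≤ B * ‖u‖ := fun u => by
    rw [hNu]; exact clarkeDir_le_bound (hB u)
  have hgb : ∀ u : H, ‖g u‖ ≤ B * ‖u‖ := by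
    intro u
    rw [Real.norm_eq_abs, abs_le]
    constructor
    · have h1 : g (-u) ≤ N (-u) := hg2 (-u)
      have h2 : N (-u) ≤ B * ‖u‖ := by simpa using hNle (-u)
      have h3 : g (-u) = -g u := map_neg g u
      linarith [h3 ▸ h1]
    · exact (hg2 u).trans (hNle u)
  set G := LinearMap.mkContinuous g B hgb with hG
  set w := (InnerProductSpace.toDual ℝ H).symm G with hw
  have hwap : ∀ u : H, ⟪w, u⟫ = g u := by
    intro u
    rw [hw, InnerProductSpace.toDual_symm_apply]
    rfl
  refine ⟨w, fun u => by rw [hwap]; exact (hg2 u).trans_eq (hNu u), ?_⟩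
  rw [hwap]
  have := hg1 ⟨v, Submodule.mem_span_singleton_self v⟩
  rw [this]
  exact (LinearPMap.mkSpanSingleton_apply ℝ ℝ hv (N v)).trans (hNu v)

end Aux2

section Aux3

variable {H : Type*} [NormedAddCommGroup H] [InnerProductSpace ℝ H]

lemma eventually_slope_lt {f : H → ℝ} {y : H} (hl : LocallyLipschitzNear f y) (v : H) {r : ℝ}
    (hr : clarkeDir f y v < r) :
    ∀ᶠ h in 𝓝[>] (0 : ℝ), (f (y + h • v) - f y) / h < r := by
  obtain ⟨B, hB0, hB⟩ := llip_bound hl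
  set φ : ℝ → H × ℝ := fun h => (y, h) with hφdef
  have hφ : Tendsto φ (𝓝[>] (0 : ℝ)) ((𝓝 y) ×ˢ (𝓝[>] (0 : ℝ))) :=
    Tendsto.prodMk tendsto_const_nhds tendsto_id
  have hb : ∀ᶠ h in 𝓝[>] (0 : ℝ), |cQuot f v (φ h)| ≤ B * ‖v‖ := hφ.eventually (hB v)
  have hles : limsup (fun h => cQuot f v (φ h)) (𝓝[>] (0 : ℝ)) ≤ clarkeDir f y v :=
    limsup_comp_le hφ (cobdd_of_abs hb) (bdd_of_abs (hB v))
  have := eventually_lt_of_limsup_lt (lt_of_le_of_lt hles hr) (bdd_of_abs hb)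
  exact this

lemma cont_of_llip {f : H → ℝ} (h : ∀ y : H, LocallyLipschitzNear f y) : Continuous f := by
  rw [continuous_iff_continuousAt]
  intro y
  obtain ⟨δ, hδ, L, hL⟩ := h y
  exact hL.continuousOn.continuousAt (Metric.ball_mem_nhds y hδ)

lemma min_norm_vi {C : Set H} (hC : Convex ℝ C) {p w : H} (hp : p ∈ C) (hw : w ∈ C)
    (hmin : ∀ z ∈ C, ‖p‖ ≤ ‖z‖) : 0 ≤ ⟪p, w - p⟫ := by
  by_contra hneg
  push_neg at hneg
  set d := w - p with hd
  have hd0 : d ≠ 0 := by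
    intro h
    rw [h, inner_zero_right] at hneg
    exact lt_irrefl 0 hneg
  have hdn : (0:ℝ) < ‖d‖ ^ 2 := pow_pos (norm_pos_iff.2 hd0) 2
  set s := min 1 (-⟪p, d⟫ / ‖d‖ ^ 2) with hs
  have hs0 : 0 < s := lt_min one_pos (div_pos (neg_pos.2 hneg) hdn)
  have hs1 : s ≤ 1 := min_le_left _ _
  have hmem : p + s • d ∈ C := by
    have h2 := hC hp hw (by linarith : (0:ℝ) ≤ 1 - s) hs0.le (by ring)
    have : (1 - s) • p + s • w = p + s • d := by
      rw [hd, smul_sub, sub_smul, one_smul]; abel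
    rwa [this] at h2
  have hle := hmin _ hmem
  have hs2 : s * ‖d‖ ^ 2 ≤ -⟪p, d⟫ := by
    have h3 : s ≤ -⟪p, d⟫ / ‖d‖ ^ 2 := min_le_right _ _
    calc s * ‖d‖ ^ 2 ≤ (-⟪p, d⟫ / ‖d‖ ^ 2) * ‖d‖ ^ 2 :=
          mul_le_mul_of_nonneg_right h3 hdn.le
      _ = -⟪p, d⟫ := div_mul_cancel₀ _ hdn.ne'
  have hexpand : ‖p + s • d‖ ^ 2 = ‖p‖ ^ 2 + 2 * (s * ⟪p, d⟫) + s ^ 2 * ‖d‖ ^ 2 := by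
    rw [norm_add_sq_real, real_inner_smul_right, norm_smul, Real.norm_eq_abs, mul_pow, sq_abs]
  have hsq : ‖p + s • d‖ ^ 2 < ‖p‖ ^ 2 := by nlinarith
  have hge : ‖p‖ ^ 2 ≤ ‖p + s • d‖ ^ 2 := pow_le_pow_left₀ (norm_nonneg p) hle 2
  linarith

end Aux3

/-- If the approximate descent direction obtained from a finite subset `Ξ ⊆ F_ε(x)` does not
yield sufficient decrease for some `f_i`, then a new subderivative `w' ∈ ∂f_i(x + t'·ṽ)`
violating the angle test exists, and `w' ∈ F_ε(x) \ convexHull Ξ`. -/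
theorem stmt12 {H : Type*} [NormedAddCommGroup H] [InnerProductSpace ℝ H] [CompleteSpace H]
    {k : ℕ} (f : Fin k → H → ℝ)
    (hlip : ∀ i, ∀ y : H, LocallyLipschitzNear (f i) y)
    (x : H) (ε : ℝ) (hε : 0 < ε) (c : ℝ) (hc : c ∈ Set.Ioo (0 : ℝ) 1)
    (Ξ : Finset H) (hΞne : Ξ.Nonempty) (hΞ : (Ξ : Set H) ⊆ multiSubdiff f ε x)
    (vt : H) (hvmem : -vt ∈ convexHull ℝ (Ξ : Set H))
    (hvmin : ∀ w ∈ convexHull ℝ (Ξ : Set H), ‖vt‖ ≤ ‖w‖) (hv0 : vt ≠ 0)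
    (i : Fin k) (hviol : f i (x + (ε / ‖vt‖) • vt) > f i x - c * ε * ‖vt‖) :
    ∃ t' ∈ Set.Ioc (0 : ℝ) (ε / ‖vt‖), ∃ w' ∈ clarkeSubdiff (f i) (x + t' • vt),
      ⟪vt, w'⟫ > -c * ‖vt‖ ^ 2 ∧ w' ∈ multiSubdiff f ε x ∧
      w' ∉ convexHull ℝ (Ξ : Set H) := by
  obtain ⟨hc0, hc1⟩ := hc
  have hnv : 0 < ‖vt‖ := norm_pos_iff.2 hv0
  have hT : 0 < ε / ‖vt‖ := div_pos hε hnv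
  suffices hmain : ∃ t' ∈ Set.Ioc (0:ℝ) (ε / ‖vt‖),
      ∃ w' ∈ clarkeSubdiff (f i) (x + t' • vt), ⟪vt, w'⟫ > -c * ‖vt‖ ^ 2 by
    obtain ⟨t', ht', w', hw', hip⟩ := hmain
    refine ⟨t', ht', w', hw', hip, ?_, ?_⟩
    · -- membership in multiSubdiff
      have hy : x + t' • vt ∈ Metric.closedBall x ε := by
        rw [Metric.mem_closedBall, dist_eq_norm, add_sub_cancel_left, norm_smul,
          Real.norm_eq_abs, abs_of_pos ht'.1]
        calc t' * ‖vt‖ ≤ (ε / ‖vt‖) * ‖vt‖ := mul_le_mul_of_nonneg_right ht'.2 hnv.le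
          _ = ε := div_mul_cancel₀ ε hnv.ne'
      have h1 : w' ∈ goldsteinSubdiff (f i) ε x :=
        subset_closure (subset_convexHull ℝ _ (Set.mem_biUnion hy hw'))
      exact subset_closure (subset_convexHull ℝ _ (Set.mem_iUnion.2 ⟨i, h1⟩))
    · intro hmem
      have hvi : 0 ≤ ⟪-vt, w' - -vt⟫ :=
        min_norm_vi (convex_convexHull ℝ _) hvmem hmem
          (fun z hz => by rw [norm_neg]; exact hvmin z hz)
      have hexp : ⟪-vt, w' - -vt⟫ = -⟪vt, w'⟫ - ‖vt‖ ^ 2 := by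
        rw [inner_neg_left, inner_sub_right, inner_neg_right, real_inner_self_eq_norm_sq]
        ring
      rw [hexp] at hvi
      nlinarith [hip, hnv]
  -- main part
  by_contra hcon
  push_neg at hcon
  have hder : ∀ t ∈ Set.Ioc (0:ℝ) (ε / ‖vt‖),
      clarkeDir (f i) (x + t • vt) vt ≤ -c * ‖vt‖ ^ 2 := by
    intro t ht
    obtain ⟨w, hw, hwe⟩ := exists_clarke_sub (hlip i (x + t • vt)) hv0 (v := vt)
    have h2 := hcon t ht w hw
    rw [real_inner_comm] at h2
    exact hwe ▸ h2
  set K : ℝ := -c * ‖vt‖ ^ 2 with hK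
  set g : ℝ → ℝ := fun t => f i (x + t • vt) with hg
  have hgc : Continuous g := by
    apply (cont_of_llip (hlip i)).comp
    exact continuous_const.add (continuous_id.smul continuous_const)
  have hstep : ∀ δ ∈ Set.Ioc (0:ℝ) (ε / ‖vt‖), g (ε / ‖vt‖) ≤ g δ + K * (ε / ‖vt‖ - δ) := by
    intro δ hδ
    have hB' : ∀ s ∈ Set.Ico δ (ε / ‖vt‖),
        HasDerivWithinAt (fun s => g δ + K * (s - δ)) K (Set.Ici s) s := by
      intro s _
      have h1 : HasDerivWithinAt (fun s : ℝ => s - δ) 1 (Set.Ici s) s :=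
        (hasDerivWithinAt_id s _).sub_const δ
      have h2 := (h1.const_mul K).const_add (g δ)
      simpa using h2
    have hbound : ∀ s ∈ Set.Ico δ (ε / ‖vt‖), ∀ r, K < r →
        ∃ᶠ z in 𝓝[>] s, slope g s z < r := by
      intro s hs r hr
      have hsIoc : s ∈ Set.Ioc (0:ℝ) (ε / ‖vt‖) := ⟨lt_of_lt_of_le hδ.1 hs.1, hs.2.le⟩
      have hlt : clarkeDir (f i) (x + s • vt) vt < r := lt_of_le_of_lt (hder s hsIoc) hr
      have hev := eventually_slope_lt (hlip i (x + s • vt)) vt hlt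
      have htend : Tendsto (fun z : ℝ => z - s) (𝓝[>] s) (𝓝[>] (0:ℝ)) := by
        refine tendsto_nhdsWithin_iff.2 ⟨?_, ?_⟩
        · have h0 : Tendsto (fun z : ℝ => z - s) (𝓝 s) (𝓝 (s - s)) :=
            (continuous_id.sub continuous_const).tendsto s
          rw [sub_self] at h0
          exact h0.mono_left nhdsWithin_le_nhds
        · exact eventually_mem_nhdsWithin.mono fun z hz => Set.mem_Ioi.2 (sub_pos.2 hz)
      have hev2 := htend.eventually hev
      refine (hev2.mono fun z hz => ?_).frequently
      have harg : x + z • vt = (x + s • vt) + (z - s) • vt := by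
        rw [sub_smul]; abel
      have hslope : slope g s z = (f i ((x + s • vt) + (z - s) • vt) - f i (x + s • vt)) / (z - s) := by
        rw [slope_def_field, hg]
        rw [← harg]
      rw [hslope]
      exact hz
    have := image_le_of_liminf_slope_right_le_deriv_boundary (f := g) (a := δ) (b := ε / ‖vt‖)
      hgc.continuousOn (by simp) (by fun_prop) hB' hbound (Set.right_mem_Icc.2 hδ.2)
    exact this
  have hlim : Tendsto (fun δ => g δ + K * (ε / ‖vt‖ - δ)) (𝓝[>] (0:ℝ))
      (𝓝 (g 0 + K * (ε / ‖vt‖))) := by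
    have h1 : Tendsto g (𝓝[>] (0:ℝ)) (𝓝 (g 0)) := (hgc.tendsto 0).mono_left nhdsWithin_le_nhds
    have h2 : Tendsto (fun δ : ℝ => K * (ε / ‖vt‖ - δ)) (𝓝 (0:ℝ))
        (𝓝 (K * (ε / ‖vt‖))) := by
      have hc2 : Continuous (fun δ : ℝ => K * (ε / ‖vt‖ - δ)) :=
        continuous_const.mul (continuous_const.sub continuous_id)
      have := hc2.tendsto (0:ℝ)
      simpa using this
    exact h1.add (h2.mono_left nhdsWithin_le_nhds)
  have hev : ∀ᶠ δ in 𝓝[>] (0:ℝ), g (ε / ‖vt‖) ≤ g δ + K * (ε / ‖vt‖ - δ) := by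
    filter_upwards [Ioc_mem_nhdsGT_of_mem ⟨le_rfl, hT⟩] with δ hδ using hstep δ hδ
  have hfinal : g (ε / ‖vt‖) ≤ g 0 + K * (ε / ‖vt‖) := ge_of_tendsto hlim hev
  have hg0 : g 0 = f i x := by rw [hg]; simp
  have hKT : K * (ε / ‖vt‖) = -(c * ε * ‖vt‖) := by
    rw [hK]; field_simp
  rw [hg0, hKT] at hfinal
  have hgT : g (ε / ‖vt‖) = f i (x + (ε / ‖vt‖) • vt) := rfl
  rw [hgT] at hfinal
  linarith
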